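/- Let γ ∈ (0, 1) and μ ≠ 0 be real numbers, and T > 0. The function a(t) = [((γ - 1) + exp(μ(C₂ - t)/(1 - γ))) / μ]^(1-γ), where C₂ = ((1-γ)/μ) · log(1 - γ) + T, satisfies a(T) = 0 and solves the Bernoulli ODE a'(t) + (1 - γ) · a(t)^(γ/(γ-1)) + μ · a(t) = 0 on any interval where (γ - 1 + exp(μ(C₂ - t)/(1-γ)))/μ > 0. -/

import Mathlib

/-- The function `a(t) = [((γ-1) + e^{μ(C₂-t)/(1-γ)})/μ]^{1-γ}` with
`C₂ = ((1-γ)/μ) log(1-γ) + T` satisfies `a(T) = 0` and the Bernoulli ODE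
`a' + (1-γ) a^{γ/(γ-1)} + μ a = 0` wherever the base is positive. -/
theorem stmt_4 (γ μ T C₂ : ℝ) (hγ : γ ∈ Set.Ioo (0 : ℝ) 1) (hμ : μ ≠ 0) (hT : 0 < T)
    (hC₂ : C₂ = (1 - γ) / μ * Real.log (1 - γ) + T)
    (a : ℝ → ℝ)
    (ha : ∀ t, a t = (((γ - 1) + Real.exp (μ * (C₂ - t) / (1 - γ))) / μ) ^ (1 - γ)) :
    a T = 0 ∧
    ∀ t : ℝ, 0 < ((γ - 1) + Real.exp (μ * (C₂ - t) / (1 - γ))) / μ →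
      HasDerivAt a (-((1 - γ) * a t ^ (γ / (γ - 1)) + μ * a t)) t := by
  obtain ⟨hγ0, hγ1⟩ := hγ
  have h1γ : (0:ℝ) < 1 - γ := by linarith
  constructor
  · rw [ha]
    have harg : μ * (C₂ - T) / (1 - γ) = Real.log (1 - γ) := by
      rw [hC₂]; field_simp; ring
    rw [harg, Real.exp_log h1γ]
    have h0 : (γ - 1 + (1 - γ)) / μ = 0 := by field_simp; ring
    rw [h0, Real.zero_rpow (by linarith)]
  · intro t hb
    set b : ℝ := ((γ - 1) + Real.exp (μ * (C₂ - t) / (1 - γ))) / μ with hbdef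
    set E : ℝ := μ * (C₂ - t) / (1 - γ) with hE
    have hfun : a = fun t => (((γ - 1) + Real.exp (μ * (C₂ - t) / (1 - γ))) / μ) ^ (1 - γ) :=
      funext ha
    have hinner : HasDerivAt (fun t : ℝ => μ * (C₂ - t) / (1 - γ)) (μ * (0 - 1) / (1 - γ)) t :=
      (((hasDerivAt_const t C₂).sub (hasDerivAt_id t)).const_mul μ).div_const (1 - γ)
    have hbder : HasDerivAt (fun t : ℝ => ((γ - 1) + Real.exp (μ * (C₂ - t) / (1 - γ))) / μ)
        ((Real.exp E * (μ * (0 - 1) / (1 - γ))) / μ) t :=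
      ((hinner.exp).const_add (γ - 1)).div_const μ
    have hader := hbder.rpow_const (p := 1 - γ) (Or.inl (ne_of_gt hb))
    rw [hfun]
    convert hader using 1
    have hμb : μ * b = (γ - 1) + Real.exp E := by
      rw [hbdef]; field_simp
    have h1 : ((b ^ (1 - γ) : ℝ)) ^ (γ / (γ - 1)) = b ^ (-γ) := by
      rw [← Real.rpow_mul hb.le]
      congr 1
      have hγ1' : γ - 1 ≠ 0 := by linarith
      field_simp
      ring
    have h2 : (1 - γ) - 1 = -γ := by ring
    have h3 : (b : ℝ) ^ (1 - γ) = b * b ^ (-γ) := by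
      nth_rewrite 2 [show b = b ^ (1:ℝ) from (Real.rpow_one b).symm]
      rw [← Real.rpow_add hb]
      congr 1
    beta_reduce
    rw [show (γ - 1 + Real.exp (μ * (C₂ - t) / (1 - γ))) / μ = b from rfl]
    rw [h1, h2, h3]
    rw [show μ * (b * b ^ (-γ)) = (μ * b) * b ^ (-γ) by ring, hμb]
    have hc : Real.exp E * (μ * (0 - 1) / (1 - γ)) / μ = -(Real.exp E / (1 - γ)) := by
      field_simp
      ring
    rw [hc, show -(Real.exp E / (1 - γ)) * (1 - γ) = -Real.exp E from by field_simp]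
    ring
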